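/- arXiv:2405.07112 — 2 statements merged into one kernel-verified Lean document; each statement's English description precedes it below -/
import Mathlib

section
/- Let p ≥ q > 0 be natural numbers and S a family of sets with the (p,q)-property such that for every finite subfamily F ⊆ S with the (p,q)-property, F has a transversal of size at most n. Then for every natural number q' > 0, setting p' = n(q'-1)+1, the family S has the (p',q')-property. -/
/-- A family `S` has the `(p,q)`-property if among any `p` distinct sets of `S` there are
`q` with nonempty intersection. -/
def HasPQProperty {α : Type*} (S : Set (Set α)) (p q : ℕ) : Prop :=
  ∀ T ⊆ S, T.Finite → T.ncard = p →
    ∃ G ⊆ T, G.ncard = q ∧ (⋂₀ G).Nonempty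

/-- Combinatorial core of Corollary 3.2: if `S` has the `(p,q)`-property and every finite
subfamily of `S` with the `(p,q)`-property has a transversal of size at most `n`, then for
every `q' > 0` the family `S` has the `(n(q'-1)+1, q')`-property. -/
theorem stmt_6 {α : Type*} (S : Set (Set α)) (p q n : ℕ)
    (hq : 0 < q) (hpq : q ≤ p)
    (hS : HasPQProperty S p q)
    (htrans : ∀ F ⊆ S, F.Finite → HasPQProperty F p q →
      ∃ T : Set α, T.Finite ∧ T.ncard ≤ n ∧ ∀ A ∈ F, (A ∩ T).Nonempty) :
    ∀ q' : ℕ, 0 < q' → HasPQProperty S (n * (q' - 1) + 1) q' := by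
  intro q' hq' T hTS hTfin hTcard
  -- T inherits the (p,q)-property from S
  have hTpq : HasPQProperty T p q := fun U hUT hUfin hUcard =>
    hS U (hUT.trans hTS) hUfin hUcard
  obtain ⟨W, hWfin, hWcard, hWmeet⟩ := htrans T hTS hTfin hTpq
  -- T is nonempty
  have hTne : T.Nonempty := by
    rw [← Set.ncard_pos hTfin] at *; omega
  obtain ⟨A0, hA0⟩ := hTne
  obtain ⟨x0, hx0⟩ := hWmeet A0 hA0
  classical
  set t := hTfin.toFinset with ht
  set w := hWfin.toFinset with hw
  have htcard : t.card = n * (q' - 1) + 1 := by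
    rw [← hTcard, ht, Set.ncard_eq_toFinset_card _ hTfin]
  have hwcard : w.card ≤ n := by
    rw [← Set.ncard_eq_toFinset_card _ hWfin]; exact hWcard
  -- choose for each A a point of A ∩ W
  let f : Set α → α := fun A => if h : (A ∩ W).Nonempty then h.some else x0
  have hf : ∀ A ∈ t, f A ∈ A ∩ W := by
    intro A hA
    rw [ht, Set.Finite.mem_toFinset] at hA
    have h := hWmeet A hA
    simp only [f, dif_pos h]
    exact h.some_mem
  have hmaps : ∀ A ∈ t, f A ∈ w := by
    intro A hA
    rw [hw, Set.Finite.mem_toFinset]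
    exact (hf A hA).2
  have hlt : w.card * (q' - 1) < t.card := by
    rw [htcard]
    calc w.card * (q' - 1) ≤ n * (q' - 1) := Nat.mul_le_mul_right _ hwcard
    _ < n * (q' - 1) + 1 := Nat.lt_succ_self _
  obtain ⟨y, _, hy'⟩ := Finset.exists_lt_card_fiber_of_mul_lt_card_of_maps_to hmaps hlt
  have hq'le : q' ≤ (t.filter fun A => f A = y).card := by omega
  obtain ⟨G', hG'sub, hG'card⟩ := Finset.exists_subset_card_eq hq'le
  refine ⟨↑G', ?_, ?_, ⟨y, ?_⟩⟩
  · intro A hA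
    have : A ∈ t := Finset.mem_of_mem_filter A (hG'sub (by exact_mod_cast hA))
    rwa [ht, Set.Finite.mem_toFinset] at this
  · rw [Set.ncard_coe_finset]; exact hG'card
  · rw [Set.mem_sInter]
    intro A hA
    have hAt : A ∈ t.filter fun A => f A = y := hG'sub (by exact_mod_cast hA)
    rw [Finset.mem_filter] at hAt
    have := hf A hAt.1
    rw [hAt.2] at this
    exact this.1
end

section
/- In the topological space X = { (x,y) ∈ ℝ² : y < x } with the topology τ̃ generated by the sets A(x',x'',x''',y',y'',y''') (for y' < y'' < y''' < x' < x'' < x'''), every singleton is closed, i.e., τ̃ is T1. -/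
/-- The half-plane below the diagonal. -/
def HalfPlane : Type := {p : ℝ × ℝ // p.2 < p.1}

/-- The basic open set `A(x',x'',x''',y',y'',y''')` of Example 5.15. -/
def basicSet (x' x'' x''' y' y'' y''' : ℝ) : Set HalfPlane :=
  {p | (p.val.2 < y' ∧ p.val.2 < p.val.1) ∨
    (y'' < p.val.2 ∧ p.val.2 < y''' ∧
      ((p.val.2 < p.val.1 ∧ p.val.1 < y''') ∨
       (x' < p.val.1 ∧ p.val.1 < x'') ∨
       x''' < p.val.1))}

/-- The topology `τ̃` generated by the sets `A(x',x'',x''',y',y'',y''')` for parameters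
`y' < y'' < y''' < x' < x'' < x'''`. -/
def tauTilde : TopologicalSpace HalfPlane :=
  TopologicalSpace.generateFrom
    {S | ∃ x' x'' x''' y' y'' y''' : ℝ,
      y' < y'' ∧ y'' < y''' ∧ y''' < x' ∧ x' < x'' ∧ x'' < x''' ∧
      S = basicSet x' x'' x''' y' y'' y'''}


/-- Separation lemma: for distinct points, a basic set containing `q` but not `p`. -/
lemma sep (p q : HalfPlane) (h : q ≠ p) :
    ∃ x' x'' x''' y' y'' y''' : ℝ,
      y' < y'' ∧ y'' < y''' ∧ y''' < x' ∧ x' < x'' ∧ x'' < x''' ∧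
      q ∈ basicSet x' x'' x''' y' y'' y''' ∧ p ∉ basicSet x' x'' x''' y' y'' y''' := by
  obtain ⟨⟨a, b⟩, hp⟩ := p
  obtain ⟨⟨c, d⟩, hq⟩ := q
  simp only at hp hq
  have hne : ¬(c = a ∧ d = b) := by
    intro ⟨h1, h2⟩; exact h (by subst h1 h2; rfl)
  simp only [basicSet, Set.mem_setOf_eq]
  rcases lt_trichotomy d b with hdb | hdb | hdb
  · -- d < b : use first clause
    refine ⟨b + 3, b + 4, b + 5, (d + b) / 2, b + 1, b + 2, by linarith, by linarith,
      by linarith, by linarith, by linarith, ?_, ?_⟩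
    · exact Or.inl ⟨by linarith, hq⟩
    · rintro (⟨h1, _⟩ | ⟨h1, _⟩) <;> linarith
  · -- d = b, so c ≠ a
    subst hdb
    have hca : c ≠ a := fun hc => hne ⟨hc, rfl⟩
    rcases hca.lt_or_gt with hca | hca
    · -- c < a
      refine ⟨a + 1, a + 2, a + 3, d - 2, d - 1, (c + a) / 2, by linarith, by linarith,
        by linarith, by linarith, by linarith, ?_, ?_⟩
      · exact Or.inr ⟨by linarith, by linarith, Or.inl ⟨hq, by linarith⟩⟩
      · rintro (⟨h1, _⟩ | ⟨_, _, (⟨_, h3⟩ | ⟨h3, _⟩ | h3)⟩) <;> linarith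
    · -- a < c
      refine ⟨a + (c - a) / 4, a + (c - a) / 2, a + 3 * (c - a) / 4, d - 2, d - 1,
        (d + a) / 2, by linarith, by linarith, by linarith, by linarith, by linarith, ?_, ?_⟩
      · exact Or.inr ⟨by linarith, by linarith, Or.inr (Or.inr (by linarith))⟩
      · rintro (⟨h1, _⟩ | ⟨_, _, (⟨_, h3⟩ | ⟨h3, _⟩ | h3)⟩) <;> linarith
  · -- b < d : use second clause with y'' between b and d
    refine ⟨max c d + 2, max c d + 3, max c d + 4, b - 1, (b + d) / 2, max c d + 1,
      by linarith, ?_, by linarith, by linarith, by linarith, ?_, ?_⟩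
    · have := le_max_right c d; linarith
    · have h1 := le_max_left c d
      have h2 := le_max_right c d
      exact Or.inr ⟨by linarith, by linarith, Or.inl ⟨hq, by linarith⟩⟩
    · rintro (⟨h1, _⟩ | ⟨h1, _⟩) <;> linarith

/-- The topology `τ̃` is T1: every singleton is closed. -/
theorem stmt_18 :
    ∀ p : HalfPlane, @IsClosed HalfPlane tauTilde {p} := by
  intro p
  letI := tauTilde
  rw [← isOpen_compl_iff]
  rw [isOpen_iff_forall_mem_open]
  intro q hq
  obtain ⟨x', x'', x''', y', y'', y''', h1, h2, h3, h4, h5, hqmem, hpnot⟩ :=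
    sep p q (by simpa using hq)
  refine ⟨basicSet x' x'' x''' y' y'' y''', ?_, ?_, hqmem⟩
  · intro r hr
    simp only [Set.mem_compl_iff, Set.mem_singleton_iff]
    rintro rfl; exact hpnot hr
  · exact TopologicalSpace.GenerateOpen.basic _
      ⟨x', x'', x''', y', y'', y''', h1, h2, h3, h4, h5, rfl⟩
end
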